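/- Let E be a real normed space, X ⊆ E, and suppose u ∈ E with ‖u‖ = 1 satisfies tu ∈ X for all t ≥ 0. Then for every x ∈ E, the limit lim_{t→∞} (‖x − tu‖ − t) exists and equals sup { −f(x) : f ∈ E*, ‖f‖ = 1, f(u) = 1 }. Moreover the resulting function h satisfies h(su) = −s for all s ≥ 0. -/

import Mathlib

open Filter

section aux

variable {E : Type*} [NormedAddCommGroup E] [NormedSpace ℝ E] {u : E}

lemma aux_anti (hu : ‖u‖ = 1) (x : E) : Antitone (fun t : ℝ => ‖x - t • u‖ - t) := by
  intro t s hts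
  have h1 : x - s • u = (x - t • u) + (t - s) • u := by
    rw [sub_smul]; abel
  have h2 : ‖x - s • u‖ ≤ ‖x - t • u‖ + (s - t) := by
    rw [h1]
    calc ‖(x - t • u) + (t - s) • u‖ ≤ ‖x - t • u‖ + ‖(t - s) • u‖ := norm_add_le _ _
    _ = ‖x - t • u‖ + (s - t) := by
        rw [norm_smul, hu, mul_one, Real.norm_eq_abs, abs_sub_comm, abs_of_nonneg (by linarith)]
  simp only
  linarith

lemma aux_lb (x : E) {f : E →L[ℝ] ℝ} (hf1 : ‖f‖ = 1) (hfu : f u = 1) (t : ℝ) :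
    -(f x) ≤ ‖x - t • u‖ - t := by
  have h1 : -(f (x - t • u)) ≤ ‖x - t • u‖ := by
    calc -(f (x - t • u)) ≤ |f (x - t • u)| := neg_le_abs _
    _ ≤ ‖f‖ * ‖x - t • u‖ := f.le_opNorm _
    _ = ‖x - t • u‖ := by rw [hf1, one_mul]
  have h2 : f (x - t • u) = f x - t := by
    rw [map_sub, map_smul, hfu]; simp
  rw [h2] at h1
  linarith

lemma aux_hu_ne (hu : ‖u‖ = 1) : u ≠ 0 := by
  intro h; rw [h, norm_zero] at hu; norm_num at hu

lemma aux_bdd (hu : ‖u‖ = 1) (x : E) :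
    BddBelow (Set.range fun t : ℝ => ‖x - t • u‖ - t) := by
  obtain ⟨f, hf1, hfu⟩ := exists_dual_vector ℝ u (norm_ne_zero_iff.mpr (aux_hu_ne hu))
  rw [hu] at hfu
  exact ⟨-(f x), by rintro r ⟨t, rfl⟩; exact aux_lb x hf1 hfu t⟩

noncomputable def auxh (u : E) (x : E) : ℝ := ⨅ t : ℝ, (‖x - t • u‖ - t)

lemma aux_tendsto (hu : ‖u‖ = 1) (x : E) :
    Tendsto (fun t : ℝ => ‖x - t • u‖ - t) atTop (nhds (auxh u x)) :=
  tendsto_atTop_ciInf (aux_anti hu x) (aux_bdd hu x)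

lemma aux_ray (hu : ‖u‖ = 1) (s : ℝ) : auxh u (s • u) = -s := by
  have h : Tendsto (fun t : ℝ => ‖s • u - t • u‖ - t) atTop (nhds (-s)) := by
    apply Tendsto.congr' _ tendsto_const_nhds
    filter_upwards [eventually_ge_atTop s] with t ht
    rw [← sub_smul, norm_smul, hu, mul_one, Real.norm_eq_abs, abs_of_nonpos (by linarith)]
    ring
  exact tendsto_nhds_unique (aux_tendsto hu (s • u)) h

lemma aux_le_norm (hu : ‖u‖ = 1) (x : E) : auxh u x ≤ ‖x‖ := by
  have := ciInf_le (aux_bdd hu x) (0 : ℝ)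
  simpa [auxh] using this

lemma aux_homog (hu : ‖u‖ = 1) {c : ℝ} (hc : 0 < c) (x : E) :
    auxh u (c • x) = c * auxh u x := by
  have h1 : Tendsto (fun t : ℝ => c * (‖x - t • u‖ - t)) atTop (nhds (c * auxh u x)) :=
    (aux_tendsto hu x).const_mul c
  have h2 : Tendsto (fun t : ℝ => t / c) atTop atTop :=
    tendsto_id.atTop_div_const hc
  have h3 : Tendsto (fun t : ℝ => c * (‖x - (t / c) • u‖ - t / c)) atTop
      (nhds (c * auxh u x)) := by
    have := ((aux_tendsto hu x).comp h2).const_mul c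
    exact this
  have h4 : (fun t : ℝ => c * (‖x - (t / c) • u‖ - t / c)) =
      fun t : ℝ => ‖c • x - t • u‖ - t := by
    funext t
    have he : c • x - t • u = c • (x - (t / c) • u) := by
      rw [smul_sub, smul_smul, mul_div_cancel₀ _ hc.ne']
    rw [he, norm_smul_of_nonneg hc.le, mul_sub, mul_div_cancel₀ _ hc.ne']
  rw [h4] at h3
  exact tendsto_nhds_unique (aux_tendsto hu (c • x)) h3

lemma aux_subadd (hu : ‖u‖ = 1) (x y : E) :
    auxh u (x + y) ≤ auxh u x + auxh u y := by
  have h1 : Tendsto (fun t : ℝ => (‖x - t • u‖ - t) + (‖y - t • u‖ - t)) atTop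
      (nhds (auxh u x + auxh u y)) := (aux_tendsto hu x).add (aux_tendsto hu y)
  refine ge_of_tendsto h1 ?_
  filter_upwards with t
  have hmem : ‖(x + y) - (2 * t) • u‖ - 2 * t ≤ (‖x - t • u‖ - t) + (‖y - t • u‖ - t) := by
    have : (x + y) - (2 * t) • u = (x - t • u) + (y - t • u) := by
      rw [two_mul, add_smul]; abel
    rw [this]
    have := norm_add_le (x - t • u) (y - t • u)
    linarith
  calc auxh u (x + y) ≤ ‖(x + y) - (2 * t) • u‖ - 2 * t := ciInf_le (aux_bdd hu _) (2 * t)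
  _ ≤ _ := hmem

lemma aux_nonneg_sum (hu : ‖u‖ = 1) (x : E) : 0 ≤ auxh u x + auxh u (-x) := by
  have := aux_subadd hu x (-x)
  have h0 : auxh u (x + -x) = 0 := by
    rw [add_neg_cancel]
    have := aux_ray hu 0
    simpa using this
  linarith

/-- key Hahn-Banach step: there is `f` with `‖f‖ = 1`, `f u = 1`, `-(f x) = auxh u x`. -/
lemma aux_exists_f (hu : ‖u‖ = 1) (x : E) :
    ∃ f : E →L[ℝ] ℝ, ‖f‖ = 1 ∧ f u = 1 ∧ -(f x) = auxh u x := by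
  by_cases hx : x = 0
  · obtain ⟨f, hf1, hfu⟩ := exists_dual_vector ℝ u (norm_ne_zero_iff.mpr (aux_hu_ne hu))
    rw [hu] at hfu
    refine ⟨f, hf1, hfu, ?_⟩
    have := aux_ray hu 0
    simp only [zero_smul] at this
    rw [hx, map_zero, neg_zero, this, neg_zero]
  · -- Hahn-Banach extension from span {x}
    set p : E →ₗ.[ℝ] ℝ := LinearPMap.mkSpanSingleton x (auxh u x) hx with hp
    have hf : ∀ z : p.domain, p z ≤ auxh u (z : E) := by
      rintro ⟨z, hz⟩
      obtain ⟨c, rfl⟩ := Submodule.mem_span_singleton.1 hz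
      rw [LinearPMap.mkSpanSingleton'_apply]
      rcases lt_trichotomy c 0 with h | h | h
      · have h1 : auxh u (c • x) = (-c) * auxh u (-x) := by
          have : c • x = (-c) • (-x) := by simp
          rw [this, aux_homog hu (by linarith)]
        have h2 := aux_nonneg_sum hu x
        rw [h1]
        simp only [smul_eq_mul, RingHom.id_apply]
        nlinarith
      · subst h
        simp only [zero_smul, smul_eq_mul, zero_mul]
        have := aux_ray hu 0
        simp only [zero_smul] at this
        rw [this]; norm_num
      · rw [aux_homog hu h]
        simp
    obtain ⟨g, hg1, hg2⟩ := exists_extension_of_le_sublinear p (auxh u)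
      (fun c hc y => aux_homog hu hc y) (aux_subadd hu) hf
    have hgx : g x = auxh u x := by
      have hx_mem : x ∈ p.domain := Submodule.mem_span_singleton_self x
      have h5 := hg1 ⟨x, hx_mem⟩
      rw [h5]
      exact LinearPMap.mkSpanSingleton_apply ℝ ℝ hx (auxh u x)
    have hbound : ∀ y : E, |g y| ≤ ‖y‖ := by
      intro y
      rw [abs_le]
      constructor
      · have := (hg2 (-y)).trans (aux_le_norm hu (-y))
        rw [map_neg, norm_neg] at this
        linarith
      · exact (hg2 y).trans (aux_le_norm hu y)
    have hgu : g u = -1 := by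
      have h1 : g u ≤ auxh u u := hg2 u
      have h2 : g (-u) ≤ auxh u (-u) := hg2 (-u)
      have hq1 : auxh u u = -1 := by
        have := aux_ray hu 1; simpa using this
      have hq2 : auxh u (-u) = 1 := by
        have := aux_ray hu (-1); simpa using this
      rw [map_neg] at h2
      linarith
    set F : E →L[ℝ] ℝ := LinearMap.mkContinuous (-g) 1 (by
      intro y
      rw [one_mul, LinearMap.neg_apply, Real.norm_eq_abs, abs_neg]
      exact hbound y) with hF
    have hFapp : ∀ y, F y = -(g y) := fun y => rfl
    have hFu : F u = 1 := by rw [hFapp, hgu]; ring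
    have hFnorm : ‖F‖ = 1 := by
      refine le_antisymm (LinearMap.mkContinuous_norm_le _ zero_le_one _) ?_
      have := F.le_opNorm u
      rw [hFu, hu, mul_one] at this
      simpa using this
    exact ⟨F, hFnorm, hFu, by rw [hFapp, hgx, neg_neg]⟩

end aux

/-- If `u ∈ S_E` and the ray `{tu : t ≥ 0}` lies in `X ⊆ E`, then for every `x ∈ E` the
limit `lim_{t→∞} (‖x − tu‖ − t)` exists and equals
`sup { −f(x) : f ∈ E*, ‖f‖ = 1, f(u) = 1 }`; the resulting metric functional `h`
satisfies `h(su) = −s` for all `s ≥ 0`. -/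
theorem stmt_11 {E : Type*} [NormedAddCommGroup E] [NormedSpace ℝ E]
    (X : Set E) (u : E) (hu : ‖u‖ = 1) (hray : ∀ t : ℝ, 0 ≤ t → t • u ∈ X) :
    ∃ h : E → ℝ,
      (∀ x : E, Tendsto (fun t : ℝ => ‖x - t • u‖ - t) atTop (nhds (h x))) ∧
      (∀ x : E, h x = sSup {r : ℝ | ∃ f : E →L[ℝ] ℝ, ‖f‖ = 1 ∧ f u = 1 ∧ r = -(f x)}) ∧
      (∀ s : ℝ, 0 ≤ s → h (s • u) = -s) := by
  refine ⟨auxh u, fun x => aux_tendsto hu x, fun x => ?_, fun s _ => aux_ray hu s⟩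
  set S := {r : ℝ | ∃ f : E →L[ℝ] ℝ, ‖f‖ = 1 ∧ f u = 1 ∧ r = -(f x)} with hS
  have hub : ∀ r ∈ S, r ≤ auxh u x := by
    rintro r ⟨f, hf1, hfu, rfl⟩
    exact le_ciInf (fun t => aux_lb x hf1 hfu t)
  obtain ⟨f, hf1, hfu, hfx⟩ := aux_exists_f hu x
  have hmem : auxh u x ∈ S := ⟨f, hf1, hfu, hfx.symm⟩
  exact le_antisymm (le_csSup ⟨auxh u x, hub⟩ hmem) (csSup_le ⟨_, hmem⟩ hub)
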